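/- A finite rooted S4.1-frame F = (W, ≤) is a 2-roach if and only if there exists s ∈ W such that ↑s = {s} ∪ max(F) and for every w ∈ W \ ↓s, the generated subframe ↑w has a unique maximal point (is an S4.1.2-frame). -/

import Mathlib

/-- `m` is a maximal point: `↑m = {m}`. -/
def IsMaxPt {W : Type*} (le : W → W → Prop) (m : W) : Prop :=
  ∀ x, le m x → x = m

/-- The depth of `w` is at most `n`: every strictly ascending chain (each step goes up and
not back down, i.e. moves to a strictly higher cluster) starting at `w` has length at most
`n`. -/
def DepthLE {W : Type*} (le : W → W → Prop) (w : W) (n : ℕ) : Prop :=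
  ∀ l : List W, l.head? = some w → l.Chain' (fun a b => le a b ∧ ¬ le b a) → l.length ≤ n

/-- `s` is a splitting point witnessing the `n`-roach condition: `s` has depth at most `n`,
the up-set `↑s` is partially ordered (the restriction of `le` is antisymmetric on it), and
for every `w` there is `t_w ∈ ↑s` with `↑w ∩ ↑s = ↑t_w`. -/
def IsSplittingPoint {W : Type*} (le : W → W → Prop) (n : ℕ) (s : W) : Prop :=
  DepthLE le s n ∧
  (∀ a b, le s a → le s b → le a b → le b a → a = b) ∧
  (∀ w, ∃ t, le s t ∧ ∀ x, (le w x ∧ le s x) ↔ le t x)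

/-- An `n`-roach: a frame possessing a splitting point of depth at most `n`. -/
def IsNRoach {W : Type*} (le : W → W → Prop) (n : ℕ) : Prop :=
  ∃ s, IsSplittingPoint le n s

/-- A finite rooted S4.1-frame is a 2-roach iff there is `s` with
`↑s = {s} ∪ max(F)` such that for every `w ∉ ↓s` the generated subframe `↑w`
has a unique maximal point. -/
theorem stmt_13 {W : Type*} [Fintype W] (le : W → W → Prop)
    (hrefl : ∀ w, le w w)
    (htrans : ∀ a b c, le a b → le b c → le a c)
    (hroot : ∃ r, ∀ w, le r w)
    (hs41 : ∀ w, ∃ m, le w m ∧ IsMaxPt le m) :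
    IsNRoach le 2 ↔
      ∃ s : W, ({x | le s x} = {s} ∪ {m | IsMaxPt le m}) ∧
        ∀ w, ¬ le w s → ∃! m, le w m ∧ IsMaxPt le m := by
  constructor
  · rintro ⟨s, hdep, hanti, hsplit⟩
    have hmax : ∀ t, le s t → t = s ∨ IsMaxPt le t := by
      intro t hst
      by_cases hts : le t s
      · left; exact hanti t s hst (hrefl s) hts hst
      · right
        intro x htx
        by_cases hxt : le x t
        · exact hanti x t (htrans s t x hst htx) hst hxt htx
        · have := hdep [s, t, x] rfl
            (by simp only [List.Chain', List.isChain_cons_cons, List.isChain_singleton, and_true]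
                exact ⟨⟨hst, hts⟩, htx, hxt⟩)
          simp at this
    have hmaxin : ∀ m, IsMaxPt le m → le s m := by
      intro m hm
      obtain ⟨t, hst, ht⟩ := hsplit m
      have htm := (ht t).2 (hrefl t)
      have : t = m := hm t htm.1
      subst this; exact hst
    refine ⟨s, ?_, ?_⟩
    · ext x
      simp only [Set.mem_setOf_eq, Set.mem_union, Set.mem_singleton_iff]
      constructor
      · intro h; exact hmax x h
      · rintro (rfl | h)
        · exact hrefl x
        · exact hmaxin x h
    · intro w hws
      obtain ⟨t, hst, ht⟩ := hsplit w
      have hwt : le w t ∧ le s t := (ht t).2 (hrefl t)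
      have htmax : IsMaxPt le t := by
        rcases hmax t hst with rfl | h
        · exact absurd hwt.1 hws
        · exact h
      refine ⟨t, ⟨hwt.1, htmax⟩, ?_⟩
      rintro m ⟨hwm, hm⟩
      exact htmax m ((ht m).1 ⟨hwm, hmaxin m hm⟩)
  · rintro ⟨s, hset, huniq⟩
    have hup : ∀ x, le s x ↔ (x = s ∨ IsMaxPt le x) := by
      intro x
      have := Set.ext_iff.mp hset x
      simpa using this
    refine ⟨s, ?_, ?_, ?_⟩
    · intro l hl hc
      match l, hl, hc with
      | [], h, _ => simp
      | [a], h, _ => simp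
      | a :: b :: rest, h, hc =>
        have ha : a = s := by simpa using h
        subst ha
        rw [List.Chain', List.isChain_cons_cons] at hc
        obtain ⟨⟨hab, hba⟩, hc⟩ := hc
        have hbmax : IsMaxPt le b := by
          rcases (hup b).1 hab with rfl | h'
          · exact absurd (hrefl b) hba
          · exact h'
        match rest, hc with
        | [], _ => simp
        | c :: rest', hc =>
          rw [List.isChain_cons_cons] at hc
          obtain ⟨⟨hbc, hcb⟩, _⟩ := hc
          exact absurd (hbmax c hbc ▸ hrefl b) hcb
    · intro a b hsa hsb hab hba
      rcases (hup a).1 hsa with rfl | ha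
      · rcases (hup b).1 hsb with rfl | hb
        · rfl
        · exact hb a hba
      · exact (ha b hab).symm
    · intro w
      by_cases h : le w s
      · exact ⟨s, hrefl s, fun x =>
          ⟨fun hx => hx.2, fun hsx => ⟨htrans w s x h hsx, hsx⟩⟩⟩
      · obtain ⟨m, ⟨hwm, hm⟩, hu⟩ := huniq w h
        refine ⟨m, (hup m).2 (Or.inr hm), fun x => ⟨?_, ?_⟩⟩
        · rintro ⟨hwx, hsx⟩
          rcases (hup x).1 hsx with rfl | hx
          · exact absurd hwx h
          · have hxm : x = m := hu x ⟨hwx, hx⟩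
            rw [hxm]; exact hrefl m
        · intro hmx
          have hxm : x = m := hm x hmx
          rw [hxm]
          exact ⟨hwm, (hup m).2 (Or.inr hm)⟩
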